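/- Let r ≥ 1, u₁, u₂ ∈ ℝ, and let U₁ : ℝ → ℝ and U₂ : ℝ² → ℝ be twice continuously differentiable with U₁''(a) ≥ u₁ for all a ∈ ℝ and D²U₂(z)[w, w] ≥ u₂‖w‖² for all z, w ∈ ℝ². Define V : ℝ^r → ℝ by V(x) = Σ_{1≤i≤r} U₁(x_i) + Σ_{1≤i<j≤r} U₂(x_i, x_j). Then for every x ∈ ℝ^r and every v ∈ ℝ^r, the second derivative of V satisfies D²V(x)[v, v] ≥ (u₁ + (r-1)·u₂)·‖v‖². -/

import Mathlib

open Finset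

noncomputable def pairCLM (r : ℕ) (i j : Fin r) :
    EuclideanSpace ℝ (Fin r) →L[ℝ] EuclideanSpace ℝ (Fin 2) :=
  LinearMap.toContinuousLinearMap
    { toFun := fun x => WithLp.toLp 2 ![x i, x j]
      map_add' := fun a b => by
        ext k
        fin_cases k <;> simp [PiLp.add_apply]
      map_smul' := fun c a => by
        ext k
        fin_cases k <;> simp [PiLp.smul_apply] }

@[simp] lemma pairCLM_apply (r : ℕ) (i j : Fin r) (x : EuclideanSpace ℝ (Fin r)) :
    pairCLM r i j x = WithLp.toLp 2 ![x i, x j] := rfl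

lemma norm_sq_pair (w : EuclideanSpace ℝ (Fin 2)) :
    ‖w‖ ^ 2 = (w 0) ^ 2 + (w 1) ^ 2 := by
  rw [PiLp.norm_sq_eq_of_L2]
  simp [Fin.sum_univ_two, sq_abs]

lemma pair_sum_identity (r : ℕ) (g : Fin r → ℝ) :
    ∑ i : Fin r, ∑ j ∈ univ.filter (fun j => i < j), (g i + g j)
      = (r - 1 : ℕ) * ∑ i, g i := by
  classical
  have h1 : ∑ i : Fin r, ∑ j ∈ univ.filter (fun j => i < j), (g i + g j)
      = (∑ i : Fin r, ∑ j ∈ univ.filter (fun j => i < j), g i)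
        + ∑ i : Fin r, ∑ j ∈ univ.filter (fun j => i < j), g j := by
    simp only [Finset.sum_add_distrib]
  have h2 : ∑ i : Fin r, ∑ j ∈ univ.filter (fun j => i < j), g j
      = ∑ i : Fin r, ∑ j ∈ univ.filter (fun j => j < i), g i := by
    rw [Finset.sum_comm' (t' := univ) (s' := fun j => univ.filter (fun i => i < j))]
    intro i j
    simp [and_comm]
  rw [h1, h2, ← Finset.sum_add_distrib]
  have h3 : ∀ i : Fin r,
      (∑ j ∈ univ.filter (fun j => i < j), g i) + ∑ j ∈ univ.filter (fun j => j < i), g i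
        = (r - 1 : ℕ) * g i := by
    intro i
    rw [← Finset.sum_union]
    · have : (univ.filter (fun j => i < j)) ∪ (univ.filter (fun j => j < i))
          = univ.erase i := by
        ext j
        simp only [Finset.mem_union, Finset.mem_filter, Finset.mem_univ, true_and,
          Finset.mem_erase, and_true]
        rw [← lt_or_lt_iff_ne, or_comm]
      rw [this, Finset.sum_const, Finset.card_erase_of_mem (mem_univ i), Finset.card_univ,
        Fintype.card_fin, nsmul_eq_mul]
    · rw [Finset.disjoint_filter]
      intro j _ h1 h2
      exact absurd (h1.trans h2) (lt_irrefl i)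
  rw [Finset.sum_congr rfl fun i _ => h3 i, ← Finset.mul_sum]


/-- Hessian lower bound for the interacting potential
`V x = ∑ᵢ U₁ (xᵢ) + ∑_{i<j} U₂ (xᵢ, xⱼ)`: if `U₁'' ≥ u₁` and the Hessian of `U₂`
is bounded below by `u₂`, then the Hessian of `V` is bounded below by
`u₁ + (r - 1) u₂`. -/
theorem stmt_5 (r : ℕ) (hr : 1 ≤ r) (u₁ u₂ : ℝ)
    (U₁ : ℝ → ℝ) (U₂ : EuclideanSpace ℝ (Fin 2) → ℝ)
    (hU₁ : ContDiff ℝ 2 U₁) (hU₂ : ContDiff ℝ 2 U₂)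
    (hU₁'' : ∀ a : ℝ, u₁ ≤ iteratedDeriv 2 U₁ a)
    (hU₂'' : ∀ z w : EuclideanSpace ℝ (Fin 2),
      u₂ * ‖w‖ ^ 2 ≤ iteratedFDeriv ℝ 2 U₂ z ![w, w])
    (V : EuclideanSpace ℝ (Fin r) → ℝ)
    (hV : ∀ x : EuclideanSpace ℝ (Fin r),
      V x = (∑ i : Fin r, U₁ (x i)) +
        ∑ i : Fin r, ∑ j ∈ univ.filter (fun j => i < j),
          U₂ (WithLp.toLp 2 ![x i, x j] : EuclideanSpace ℝ (Fin 2))) :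
    ∀ x v : EuclideanSpace ℝ (Fin r),
      (u₁ + (r - 1 : ℝ) * u₂) * ‖v‖ ^ 2 ≤ iteratedFDeriv ℝ 2 V x ![v, v] := by
  intro x v
  classical
  have hU₁' : ContDiff ℝ ((2 : ℕ) : ℕ∞) U₁ := by exact_mod_cast hU₁
  have hU₂' : ContDiff ℝ ((2 : ℕ) : ℕ∞) U₂ := by exact_mod_cast hU₂
  set G₁ : EuclideanSpace ℝ (Fin r) → ℝ :=
    fun y => ∑ i : Fin r, (U₁ ∘ (EuclideanSpace.proj i)) y with hG₁def
  set G₂ : EuclideanSpace ℝ (Fin r) → ℝ :=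
    fun y => ∑ i : Fin r, (fun z => ∑ j ∈ univ.filter (fun j => i < j),
      (U₂ ∘ (pairCLM r i j)) z) y with hG₂def
  have hc1 : ∀ i : Fin r, ContDiff ℝ ((2 : ℕ) : ℕ∞) (U₁ ∘ (EuclideanSpace.proj i)) :=
    fun i => hU₁'.comp (ContinuousLinearMap.contDiff _)
  have hc2 : ∀ i j : Fin r, ContDiff ℝ ((2 : ℕ) : ℕ∞) (U₂ ∘ (pairCLM r i j)) :=
    fun i j => hU₂'.comp (ContinuousLinearMap.contDiff _)
  have hG₁c : ContDiff ℝ ((2 : ℕ) : ℕ∞) G₁ := ContDiff.sum fun i _ => hc1 i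
  have hG₂c : ContDiff ℝ ((2 : ℕ) : ℕ∞) G₂ :=
    ContDiff.sum fun i _ => ContDiff.sum fun j _ => hc2 i j
  have hVG : V = G₁ + G₂ := by
    funext y
    rw [hV y]
    rfl
  rw [hVG, iteratedFDeriv_add_apply hG₁c.contDiffAt hG₂c.contDiffAt]
  have e1 : iteratedFDeriv ℝ 2 G₁ x ![v, v]
      = ∑ i : Fin r, (v i) ^ 2 * iteratedDeriv 2 U₁ (x i) := by
    rw [hG₁def, iteratedFDeriv_sum fun i _ => hc1 i]
    simp only [Finset.sum_apply, ContinuousMultilinearMap.sum_apply]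
    refine Finset.sum_congr rfl fun i _ => ?_
    rw [ContinuousLinearMap.iteratedFDeriv_comp_right _ hU₁' x le_rfl,
      ContinuousMultilinearMap.compContinuousLinearMap_apply,
      iteratedFDeriv_apply_eq_iteratedDeriv_mul_prod]
    have : ∀ k : Fin 2, EuclideanSpace.proj i (![v, v] k) = v i := by
      intro k; fin_cases k <;> rfl
    simp only [this, Fin.prod_univ_two, smul_eq_mul]
    show v i * v i * iteratedDeriv 2 U₁ (x i) = _
    ring
  have e2 : ∀ i j : Fin r, iteratedFDeriv ℝ 2 (U₂ ∘ (pairCLM r i j)) x ![v, v]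
      = iteratedFDeriv ℝ 2 U₂ (WithLp.toLp 2 ![x i, x j] : EuclideanSpace ℝ (Fin 2))
          ![(WithLp.toLp 2 ![v i, v j] : EuclideanSpace ℝ (Fin 2)), WithLp.toLp 2 ![v i, v j]] := by
    intro i j
    rw [ContinuousLinearMap.iteratedFDeriv_comp_right _ hU₂' x le_rfl,
      ContinuousMultilinearMap.compContinuousLinearMap_apply]
    have hm : (fun k : Fin 2 => pairCLM r i j (![v, v] k))
        = ![(WithLp.toLp 2 ![v i, v j] : EuclideanSpace ℝ (Fin 2)), WithLp.toLp 2 ![v i, v j]] := by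
      funext k; fin_cases k <;> rfl
    rw [hm]
    rfl
  have hnv : ‖v‖ ^ 2 = ∑ i : Fin r, (v i) ^ 2 := by
    rw [EuclideanSpace.norm_eq, Real.sq_sqrt (by positivity)]
    exact Finset.sum_congr rfl fun i _ => sq_abs _
  have key1 : u₁ * ‖v‖ ^ 2 ≤ iteratedFDeriv ℝ 2 G₁ x ![v, v] := by
    rw [e1, hnv, Finset.mul_sum]
    refine Finset.sum_le_sum fun i _ => ?_
    rw [mul_comm u₁]
    exact mul_le_mul_of_nonneg_left (hU₁'' (x i)) (sq_nonneg _)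
  have key2 : (r - 1 : ℝ) * u₂ * ‖v‖ ^ 2 ≤ iteratedFDeriv ℝ 2 G₂ x ![v, v] := by
    have e3 : iteratedFDeriv ℝ 2 G₂ x ![v, v]
        = ∑ i : Fin r, ∑ j ∈ univ.filter (fun j => i < j),
            iteratedFDeriv ℝ 2 (U₂ ∘ (pairCLM r i j)) x ![v, v] := by
      rw [hG₂def, iteratedFDeriv_sum fun i _ => ContDiff.sum fun j _ => hc2 i j]
      simp only [Finset.sum_apply, ContinuousMultilinearMap.sum_apply]
      refine Finset.sum_congr rfl fun i _ => ?_
      rw [iteratedFDeriv_sum fun j _ => hc2 i j]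
      simp only [Finset.sum_apply, ContinuousMultilinearMap.sum_apply]
    rw [e3]
    have lb : ∑ i : Fin r, ∑ j ∈ univ.filter (fun j => i < j),
        (u₂ * ((v i) ^ 2 + (v j) ^ 2))
        ≤ ∑ i : Fin r, ∑ j ∈ univ.filter (fun j => i < j),
            iteratedFDeriv ℝ 2 (U₂ ∘ (pairCLM r i j)) x ![v, v] := by
      refine Finset.sum_le_sum fun i _ => Finset.sum_le_sum fun j _ => ?_
      rw [e2 i j]
      have := hU₂'' (WithLp.toLp 2 ![x i, x j]) (WithLp.toLp 2 ![v i, v j])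
      rw [norm_sq_pair] at this
      simpa using this
    refine le_trans ?_ lb
    have : ∑ i : Fin r, ∑ j ∈ univ.filter (fun j => i < j),
        (u₂ * ((v i) ^ 2 + (v j) ^ 2))
        = u₂ * ((r - 1 : ℕ) * ∑ i : Fin r, (v i) ^ 2) := by
      rw [← pair_sum_identity r (fun i => (v i) ^ 2), Finset.mul_sum]
      exact Finset.sum_congr rfl fun i _ => by rw [Finset.mul_sum]
    rw [this, hnv, Nat.cast_sub hr, Nat.cast_one]
    exact le_of_eq (by ring)
  calc (u₁ + (r - 1 : ℝ) * u₂) * ‖v‖ ^ 2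
      = u₁ * ‖v‖ ^ 2 + (r - 1 : ℝ) * u₂ * ‖v‖ ^ 2 := by ring
    _ ≤ iteratedFDeriv ℝ 2 G₁ x ![v, v] + iteratedFDeriv ℝ 2 G₂ x ![v, v] :=
        add_le_add key1 key2
    _ = _ := rfl
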